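/- Let K > 1 be a real. Every simple graph G on n ≥ 1 vertices contains an induced subgraph G* on at least n^(1 + log₂(1 − 1/K)) vertices satisfying Δ(G*) ≤ K·d(G*), where d(G*) is the average degree of G*. -/

import Mathlib

open scoped Classical

/-- Degree of `v` in the subgraph of `G` induced on `s`. -/
noncomputable def degOn {V : Type*} (G : SimpleGraph V) (s : Finset V) (v : V) : ℕ :=
  (s.filter (fun w => G.Adj v w)).card

/-- Number of edges of `G` with both endpoints in `s` (the edges of `G[s]`). -/
noncomputable def edgesOn {V : Type*} [Fintype V] (G : SimpleGraph V) (s : Finset V) : ℕ :=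
  (Finset.univ.filter (fun e : Sym2 V => e ∈ G.edgeSet ∧ ∀ v ∈ e, v ∈ s)).card

/-- `G[s]` is `c`-nearly regular: its maximum degree is at most `c` times its minimum degree. -/
def NearlyRegularOn {V : Type*} (G : SimpleGraph V) (s : Finset V) (c : ℝ) : Prop :=
  ∀ v ∈ s, ∀ w ∈ s, (degOn G s v : ℝ) ≤ c * (degOn G s w : ℝ)

lemma edgesOn_erase {V : Type*} [Fintype V] (G : SimpleGraph V) (s : Finset V) {v : V}
    (hv : v ∈ s) : edgesOn G (s.erase v) + degOn G s v = edgesOn G s := by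
  classical
  have hsplit := Finset.card_filter_add_card_filter_not
    (s := Finset.univ.filter (fun e : Sym2 V => e ∈ G.edgeSet ∧ ∀ x ∈ e, x ∈ s))
    (p := fun e : Sym2 V => v ∈ e)
  rw [Finset.filter_filter, Finset.filter_filter] at hsplit
  have h1 : (Finset.univ.filter (fun e : Sym2 V => (e ∈ G.edgeSet ∧ ∀ x ∈ e, x ∈ s) ∧ ¬ v ∈ e))
      = Finset.univ.filter (fun e : Sym2 V => e ∈ G.edgeSet ∧ ∀ x ∈ e, x ∈ s.erase v) := by
    apply Finset.filter_congr
    intro e _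
    simp only [Finset.mem_erase]
    constructor
    · rintro ⟨⟨he, hx⟩, hne⟩
      exact ⟨he, fun x hx' => ⟨fun h => hne (h ▸ hx'), hx x hx'⟩⟩
    · rintro ⟨he, hx⟩
      exact ⟨⟨he, fun x hx' => (hx x hx').2⟩, fun hvmem => (hx v hvmem).1 rfl⟩
  have h2 : (Finset.univ.filter (fun e : Sym2 V => (e ∈ G.edgeSet ∧ ∀ x ∈ e, x ∈ s) ∧ v ∈ e)).card
      = degOn G s v := by
    unfold degOn
    symm
    apply Finset.card_bij (fun w _ => s(v, w))
    · intro w hw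
      simp only [Finset.mem_filter] at hw
      simp only [Finset.mem_filter, Finset.mem_univ, true_and]
      refine ⟨⟨G.mem_edgeSet.2 hw.2, ?_⟩, Sym2.mem_mk_left v w⟩
      intro x hx
      rcases Sym2.mem_iff.1 hx with h | h
      · exact h ▸ hv
      · exact h ▸ hw.1
    · intro w hw w' hw' h
      exact Sym2.congr_right.1 h
    · intro e he
      simp only [Finset.mem_filter, Finset.mem_univ, true_and] at he
      obtain ⟨⟨hadj, hall⟩, hvm⟩ := he
      induction e using Sym2.ind with
      | _ a b =>
        rcases Sym2.mem_iff.1 hvm with h | h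
        · subst h
          refine ⟨b, ?_, rfl⟩
          simp only [Finset.mem_filter]
          exact ⟨hall b (Sym2.mem_mk_right v b), G.mem_edgeSet.1 hadj⟩
        · subst h
          refine ⟨a, ?_, Sym2.eq_swap⟩
          simp only [Finset.mem_filter]
          exact ⟨hall a (Sym2.mem_mk_left a v), (G.mem_edgeSet.1 hadj).symm⟩
  rw [h1, h2] at hsplit
  unfold edgesOn
  omega

lemma prune {V : Type*} [Fintype V] (G : SimpleGraph V) (h : ℕ) :
    ∀ s : Finset V, ∃ t, t ⊆ s ∧ (∀ v ∈ t, degOn G t v ≤ h) ∧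
      edgesOn G t + (h+1) * (s.card - t.card) ≤ edgesOn G s := by
  intro s
  induction s using Finset.strongInduction with
  | _ s ih =>
    by_cases hall : ∀ v ∈ s, degOn G s v ≤ h
    · exact ⟨s, Finset.Subset.refl s, hall, by simp⟩
    · push_neg at hall
      obtain ⟨v, hvs, hdeg⟩ := hall
      obtain ⟨t, hts, hall', hE⟩ := ih (s.erase v) (Finset.erase_ssubset hvs)
      refine ⟨t, hts.trans (Finset.erase_subset v s), hall', ?_⟩
      have h1 := edgesOn_erase G s hvs
      have hcard : t.card ≤ (s.erase v).card := Finset.card_le_card hts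
      have hc2 : (s.erase v).card + 1 = s.card := Finset.card_erase_add_one hvs
      have hd : s.card - t.card = ((s.erase v).card - t.card) + 1 := by omega
      rw [hd, Nat.mul_add, Nat.mul_one]
      omega

lemma keyB {K c : ℝ} (hK : 1 < K) (hc0 : 0 ≤ c) (hc1 : c ≤ 1) :
    (1 - 1/K) ^ c ≤ 1 - c/K := by
  have hK0 : (0:ℝ) < K := lt_trans one_pos hK
  have hl0 : (0:ℝ) ≤ 1 - 1/K := by
    have : 1/K < 1 := (div_lt_one hK0).2 hK
    linarith
  have h := Real.geom_mean_le_arith_mean2_weighted (w₁ := c) (w₂ := 1 - c)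
    (p₁ := 1 - 1/K) (p₂ := 1) hc0 (by linarith) hl0 zero_le_one (by ring)
  rw [Real.one_rpow, mul_one] at h
  have he : c * (1 - 1/K) + (1 - c) * 1 = 1 - c/K := by ring
  linarith

lemma keyA (D : ℕ) (hD : 1 ≤ D) :
    (D : ℝ) / (2*((D/2 : ℕ) + 1)) ≤
      Real.logb 2 ((D : ℝ) + 1) - Real.logb 2 ((D/2 : ℕ) + 1) := by
  set h : ℕ := D/2 with hh
  have h2h : 2*h ≤ D := by omega
  have h2h' : D ≤ 2*h + 1 := by omega
  have hH : (0:ℝ) < (h:ℝ) + 1 := by positivity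
  set c : ℝ := (D : ℝ) / (2*((h:ℕ) + 1 : ℝ)) with hc
  have hDr : (0:ℝ) ≤ (D:ℝ) := Nat.cast_nonneg D
  have h2hr : 2*(h:ℝ) ≤ (D:ℝ) := by exact_mod_cast h2h
  have h2hr' : (D:ℝ) ≤ 2*(h:ℝ) + 1 := by exact_mod_cast h2h'
  have hc0 : 0 ≤ c := by positivity
  have hc1 : c ≤ 1 := by
    rw [hc, div_le_one (by positivity)]
    linarith
  have hgm := Real.geom_mean_le_arith_mean2_weighted (w₁ := c) (w₂ := 1 - c)
    (p₁ := 2) (p₂ := 1) hc0 (by linarith) (by norm_num) zero_le_one (by ring)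
  rw [Real.one_rpow, mul_one] at hgm
  have step1 : (2:ℝ) ^ c ≤ 1 + c := by linarith
  have step2 : 1 + c ≤ ((D:ℝ) + 1) / ((h:ℝ) + 1) := by
    rw [le_div_iff₀ hH]
    have hce : c * ((h:ℝ)+1) = (D:ℝ)/2 := by rw [hc]; field_simp
    nlinarith [hce]
  have step3 : (2:ℝ) ^ c ≤ ((D:ℝ) + 1) / ((h:ℝ) + 1) := le_trans step1 step2
  have hlog : c ≤ Real.logb 2 (((D:ℝ) + 1) / ((h:ℝ) + 1)) := by
    have := (Real.logb_le_logb (by norm_num : (1:ℝ) < 2)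
      (Real.rpow_pos_of_pos two_pos c) (by positivity)).2 step3
    rwa [Real.logb_rpow two_pos (by norm_num)] at this
  rwa [Real.logb_div (by positivity) (by positivity)] at hlog

lemma mainLem {V : Type*} [Fintype V] (G : SimpleGraph V) {K : ℝ} (hK : 1 < K) :
    ∀ D : ℕ, ∀ s : Finset V, (∀ v ∈ s, degOn G s v ≤ D) →
      ∃ t : Finset V,
        (s.card : ℝ) * (1 - 1/K) ^ (Real.logb 2 ((D:ℝ)+1)) ≤ (t.card : ℝ) ∧
        ∀ v ∈ t, (degOn G t v : ℝ) ≤ K * (2 * (edgesOn G t : ℝ) / (t.card : ℝ)) := by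
  have hK0 : (0:ℝ) < K := lt_trans one_pos hK
  have hl0 : (0:ℝ) < 1 - 1/K := by
    have : 1/K < 1 := (div_lt_one hK0).2 hK
    linarith
  have hl1 : (1:ℝ) - 1/K ≤ 1 := by
    have : (0:ℝ) < 1/K := by positivity
    linarith
  intro D
  induction D using Nat.strong_induction_on with
  | _ D ih =>
    intro s hs
    by_cases hcond : ∀ v ∈ s, (degOn G s v : ℝ) ≤ K * (2 * (edgesOn G s : ℝ) / (s.card : ℝ))
    · refine ⟨s, ?_, hcond⟩
      have h1 : (1 - 1/K : ℝ) ^ (Real.logb 2 ((D:ℝ)+1)) ≤ 1 :=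
        Real.rpow_le_one (le_of_lt hl0) hl1
          (Real.logb_nonneg (by norm_num) (by exact_mod_cast Nat.le_add_left 1 D))
      calc (s.card : ℝ) * (1 - 1/K) ^ (Real.logb 2 ((D:ℝ)+1))
          ≤ (s.card : ℝ) * 1 := by
            apply mul_le_mul_of_nonneg_left h1 (Nat.cast_nonneg _)
        _ = (s.card : ℝ) := mul_one _
    · push_neg at hcond
      obtain ⟨v₀, hv₀, hbig⟩ := hcond
      have hM : (0:ℝ) < (s.card : ℝ) := by
        exact_mod_cast Finset.card_pos.2 ⟨v₀, hv₀⟩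
      have hD : 1 ≤ D := by
        by_contra hD0
        push_neg at hD0
        interval_cases D
        have : degOn G s v₀ = 0 := Nat.le_zero.1 (hs v₀ hv₀)
        rw [this] at hbig
        have : (0:ℝ) ≤ K * (2 * (edgesOn G s : ℝ) / (s.card : ℝ)) := by positivity
        push_cast at hbig
        linarith
      set h : ℕ := D/2 with hh
      obtain ⟨t, hts, htdeg, htE⟩ := prune G h s
      obtain ⟨u, huB, hucond⟩ := ih h (by omega) t htdeg
      refine ⟨u, ?_, hucond⟩
      -- numeric bookkeeping
      have htc : t.card ≤ s.card := Finset.card_le_card hts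
      set M : ℝ := (s.card : ℝ) with hMdef
      set T : ℝ := (t.card : ℝ) with hTdef
      have hT0 : (0:ℝ) ≤ T := Nat.cast_nonneg _
      have hTM : T ≤ M := by
        rw [hTdef, hMdef]; exact_mod_cast htc
      have hHr : (0:ℝ) < (h:ℝ) + 1 := by positivity
      -- edges bound from prune
      have hE1 : ((h:ℝ)+1) * (M - T) ≤ (edgesOn G s : ℝ) := by
        have := htE
        have hcast : ((edgesOn G t + (h+1) * (s.card - t.card) : ℕ) : ℝ)
            ≤ ((edgesOn G s : ℕ) : ℝ) := by exact_mod_cast htE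
        push_cast [Nat.cast_sub htc] at hcast
        have h0 : (0:ℝ) ≤ (edgesOn G t : ℝ) := Nat.cast_nonneg _
        linarith
      -- edge upper bound from failing condition
      have hE2 : 2 * K * (edgesOn G s : ℝ) < (D:ℝ) * M := by
        have hdle : (degOn G s v₀ : ℝ) ≤ (D:ℝ) := by exact_mod_cast hs v₀ hv₀
        have : K * (2 * (edgesOn G s : ℝ) / M) < (D:ℝ) := lt_of_lt_of_le hbig hdle
        have := (div_lt_iff₀ hM).1 (by
          have : K * 2 * (edgesOn G s : ℝ) / M < (D:ℝ) := by
            rw [mul_div_assoc] at this ⊢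
            linarith [this]
          exact this)
        linarith
      set c : ℝ := (D : ℝ) / (2*((h:ℝ) + 1)) with hcdef
      have hc0 : 0 ≤ c := by positivity
      have hc1 : c ≤ 1 := by
        rw [hcdef, div_le_one (by positivity)]
        have : (D:ℝ) ≤ 2*(h:ℝ) + 1 := by exact_mod_cast (by omega : D ≤ 2*h+1)
        linarith
      -- M * (1 - c/K) ≤ T
      have hMT : M * (1 - c/K) ≤ T := by
        have hmt : M - T < c/K * M := by
          have h1 : 2*K*(((h:ℝ)+1) * (M - T)) ≤ 2*K*(edgesOn G s : ℝ) := by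
            apply mul_le_mul_of_nonneg_left hE1 (by positivity)
          have h2 : 2*K*(((h:ℝ)+1) * (M - T)) < (D:ℝ) * M := lt_of_le_of_lt h1 hE2
          rw [hcdef, div_div, div_mul_eq_mul_div, lt_div_iff₀ (by positivity)]
          nlinarith [h2]
        nlinarith [hmt]
      -- chain the rpow inequalities
      have hA : c ≤ Real.logb 2 ((D:ℝ)+1) - Real.logb 2 ((h:ℝ)+1) := by
        have := keyA D hD
        rw [← hh] at this
        push_cast at this ⊢
        convert this using 3 <;> norm_num
      have hrpow1 : (1 - 1/K : ℝ) ^ (Real.logb 2 ((D:ℝ)+1) - Real.logb 2 ((h:ℝ)+1))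
          ≤ (1 - 1/K : ℝ) ^ c := Real.rpow_le_rpow_of_exponent_ge hl0 hl1 hA
      have hrpow2 : (1 - 1/K : ℝ) ^ c ≤ 1 - c/K := keyB hK hc0 hc1
      have hsplit : (1 - 1/K : ℝ) ^ (Real.logb 2 ((D:ℝ)+1))
          = (1 - 1/K : ℝ) ^ (Real.logb 2 ((D:ℝ)+1) - Real.logb 2 ((h:ℝ)+1))
            * (1 - 1/K : ℝ) ^ (Real.logb 2 ((h:ℝ)+1)) := by
        rw [← Real.rpow_add hl0]
        ring_nf
      have hLh0 : (0:ℝ) ≤ (1 - 1/K : ℝ) ^ (Real.logb 2 ((h:ℝ)+1)) := by positivity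
      calc M * (1 - 1/K) ^ (Real.logb 2 ((D:ℝ)+1))
          = (M * (1 - 1/K) ^ (Real.logb 2 ((D:ℝ)+1) - Real.logb 2 ((h:ℝ)+1)))
            * (1 - 1/K) ^ (Real.logb 2 ((h:ℝ)+1)) := by rw [hsplit]; ring
        _ ≤ (M * (1 - c/K)) * (1 - 1/K) ^ (Real.logb 2 ((h:ℝ)+1)) := by
            apply mul_le_mul_of_nonneg_right _ hLh0
            have := le_trans hrpow1 hrpow2
            exact mul_le_mul_of_nonneg_left this (le_of_lt hM)
        _ ≤ T * (1 - 1/K) ^ (Real.logb 2 ((h:ℝ)+1)) := by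
            apply mul_le_mul_of_nonneg_right hMT hLh0
        _ ≤ (u.card : ℝ) := huB

/-- Every graph on `n ≥ 1` vertices contains an induced subgraph `G* = G[s]` on at least
`n ^ (1 + log₂(1 - 1/K))` vertices whose maximum degree is at most `K` times its average
degree `2 |E(G*)| / |s|`. -/
theorem stmt6 :
    ∀ K : ℝ, 1 < K → ∀ n : ℕ, 1 ≤ n → ∀ G : SimpleGraph (Fin n),
      ∃ s : Finset (Fin n),
        (n : ℝ) ^ (1 + Real.logb 2 (1 - 1 / K)) ≤ (s.card : ℝ) ∧
        ∀ v ∈ s, (degOn G s v : ℝ) ≤ K * (2 * (edgesOn G s : ℝ) / (s.card : ℝ)) := by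
  intro K hK n hn G
  have hK0 : (0:ℝ) < K := lt_trans one_pos hK
  have hl0 : (0:ℝ) < 1 - 1/K := by
    have : 1/K < 1 := (div_lt_one hK0).2 hK
    linarith
  have hdeg : ∀ v ∈ (Finset.univ : Finset (Fin n)), degOn G Finset.univ v ≤ n - 1 := by
    intro v _
    have hsub : Finset.univ.filter (fun w => G.Adj v w) ⊆ Finset.univ.erase v := by
      intro w hw
      simp only [Finset.mem_filter] at hw
      exact Finset.mem_erase.2 ⟨hw.2.ne', Finset.mem_univ w⟩
    have hle := Finset.card_le_card hsub
    rw [Finset.card_erase_of_mem (Finset.mem_univ v), Finset.card_univ, Fintype.card_fin] at hle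
    exact hle
  obtain ⟨t, hB, hcond⟩ := mainLem G hK (n-1) Finset.univ hdeg
  refine ⟨t, ?_, hcond⟩
  rw [Finset.card_univ, Fintype.card_fin] at hB
  have hcast : ((n-1 : ℕ):ℝ) + 1 = (n:ℝ) := by
    rw [Nat.cast_sub hn]
    ring
  rw [hcast] at hB
  have hn0 : (0:ℝ) < (n:ℝ) := by exact_mod_cast hn
  have hid : (n:ℝ) ^ (1 + Real.logb 2 (1-1/K))
      = (n:ℝ) * (1-1/K) ^ (Real.logb 2 (n:ℝ)) := by
    rw [Real.rpow_add hn0, Real.rpow_one]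
    congr 1
    calc (n:ℝ) ^ (Real.logb 2 (1-1/K))
        = ((2:ℝ) ^ (Real.logb 2 (n:ℝ))) ^ (Real.logb 2 (1-1/K)) := by
          rw [Real.rpow_logb two_pos (by norm_num) hn0]
      _ = (2:ℝ) ^ (Real.logb 2 (n:ℝ) * Real.logb 2 (1-1/K)) := by
          rw [← Real.rpow_mul (by norm_num : (0:ℝ) ≤ 2)]
      _ = (2:ℝ) ^ (Real.logb 2 (1-1/K) * Real.logb 2 (n:ℝ)) := by ring_nf
      _ = ((2:ℝ) ^ (Real.logb 2 (1-1/K))) ^ (Real.logb 2 (n:ℝ)) := by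
          rw [← Real.rpow_mul (by norm_num : (0:ℝ) ≤ 2)]
      _ = (1-1/K) ^ (Real.logb 2 (n:ℝ)) := by
          rw [Real.rpow_logb two_pos (by norm_num) hl0]
  rw [hid]
  exact hB
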